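/- Let D ∈ ℝ^{n×n} and η > 0, and suppose D = U·S·Vᵀ where U, V ∈ ℝ^{n×n} are orthogonal matrices and S ∈ ℝ^{n×n} is diagonal with nonnegative diagonal entries. Define the nuclear norm of a matrix L ∈ ℝ^{n×n} by ‖L‖_* = trace((Lᵀ·L)^{1/2}), where (Lᵀ·L)^{1/2} is the positive semidefinite square root of the positive semidefinite matrix Lᵀ·L. Let S_η be the diagonal matrix with diagonal entries max(S_{ii} − 1/η, 0), and set L* = U·S_η·Vᵀ. Then L* minimizes the function L ↦ ‖L‖_* + (η/2)·‖L − D‖_F² over all L ∈ ℝ^{n×n}. -/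

import Mathlib

open Matrix Finset

/-- The squared Frobenius norm of a matrix. -/
def frobSq {n : ℕ} (Q : Matrix (Fin n) (Fin n) ℝ) : ℝ :=
  ∑ i, ∑ j, (Q i j) ^ 2

/-- `Lᵀ·L` is positive semidefinite. -/
theorem transpose_mul_self_posSemidef {n : ℕ} (L : Matrix (Fin n) (Fin n) ℝ) :
    (Lᵀ * L).PosSemidef := by
  have h := Matrix.posSemidef_conjTranspose_mul_self L
  simpa [Matrix.conjTranspose_eq_transpose_of_trivial] using h

open scoped ComplexOrder in
/-- The positive semidefinite square root, as `Matrix.PosSemidef.sqrt` was defined in the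
older Mathlib (it has since been removed). -/
noncomputable def Matrix.PosSemidef.sqrt {m : Type*} [Fintype m] [DecidableEq m] {𝕜 : Type*}
    [RCLike 𝕜] {A : Matrix m m 𝕜} (hA : A.PosSemidef) : Matrix m m 𝕜 :=
  hA.1.eigenvectorUnitary.1 * diagonal ((↑) ∘ Real.sqrt ∘ hA.1.eigenvalues) *
    (star hA.1.eigenvectorUnitary : Matrix m m 𝕜)

/-- The nuclear norm of a real square matrix: `‖L‖_* = trace((Lᵀ·L)^{1/2})`,
where `(Lᵀ·L)^{1/2}` is the positive semidefinite square root. -/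
noncomputable def nuclearNorm {n : ℕ} (L : Matrix (Fin n) (Fin n) ℝ) : ℝ :=
  ((transpose_mul_self_posSemidef L).sqrt).trace

open scoped MatrixOrder in
theorem Matrix.PosSemidef.sqrt_eq_cfcSqrt {m : Type*} [Fintype m] [DecidableEq m]
    {B : Matrix m m ℝ} (hB : B.PosSemidef) : hB.sqrt = CFC.sqrt B := by
  have h1 : hB.sqrt = cfc Real.sqrt B := by
    rw [hB.1.cfc_eq Real.sqrt, Matrix.IsHermitian.cfc, Unitary.conjStarAlgAut_apply]
    rfl
  have h2 : cfc Real.sqrt B = CFC.sqrt B := by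
    rw [CFC.sqrt_eq_real_sqrt B hB.nonneg, cfcₙ_eq_cfc (hf0 := Real.sqrt_zero)]
  rw [h1, h2]

open scoped MatrixOrder in
theorem Matrix.PosSemidef.eq_sqrt_of_sq_eq {m : Type*} [Fintype m] [DecidableEq m]
    {A : Matrix m m ℝ} (hA : A.PosSemidef) (B : Matrix m m ℝ) (hB : B.PosSemidef)
    (hAB : A ^ 2 = B) : A = hB.sqrt := by
  rw [hB.sqrt_eq_cfcSqrt, CFC.sqrt_unique (b := A) (by rw [← hAB, pow_two]) hA.nonneg]

open scoped MatrixOrder in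
theorem Matrix.PosSemidef.posSemidef_sqrt {m : Type*} [Fintype m] [DecidableEq m]
    {B : Matrix m m ℝ} (hB : B.PosSemidef) : hB.sqrt.PosSemidef := by
  rw [hB.sqrt_eq_cfcSqrt]
  exact Matrix.nonneg_iff_posSemidef.mp (CFC.sqrt_nonneg B)

open scoped MatrixOrder in
theorem Matrix.PosSemidef.sqrt_mul_self {m : Type*} [Fintype m] [DecidableEq m]
    {B : Matrix m m ℝ} (hB : B.PosSemidef) : hB.sqrt * hB.sqrt = B := by
  rw [hB.sqrt_eq_cfcSqrt]
  exact CFC.sqrt_mul_sqrt_self B hB.nonneg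

section SVTAux

variable {n : ℕ}

lemma SVT.psd_conj {M W : Matrix (Fin n) (Fin n) ℝ} (hM : M.PosSemidef) :
    (W * M * Wᵀ).PosSemidef := by
  have := hM.mul_mul_conjTranspose_same W
  rwa [Matrix.conjTranspose_eq_transpose_of_trivial] at this

lemma SVT.sqrt_conj {M W : Matrix (Fin n) (Fin n) ℝ} (hM : M.PosSemidef)
    (hW : W * Wᵀ = 1) :
    (SVT.psd_conj hM (W := W)).sqrt = W * hM.sqrt * Wᵀ := by
  have hW' : Wᵀ * W = 1 := mul_eq_one_comm.mp hW
  symm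
  apply Matrix.PosSemidef.eq_sqrt_of_sq_eq (SVT.psd_conj hM.posSemidef_sqrt)
  rw [pow_two]
  calc W * hM.sqrt * Wᵀ * (W * hM.sqrt * Wᵀ)
      = W * (hM.sqrt * (Wᵀ * W) * hM.sqrt) * Wᵀ := by simp only [Matrix.mul_assoc]
    _ = W * M * Wᵀ := by rw [hW', Matrix.mul_one, hM.sqrt_mul_self]

lemma SVT.sqrt_congr {A B : Matrix (Fin n) (Fin n) ℝ} (hA : A.PosSemidef) (hB : B.PosSemidef)
    (h : A = B) : hA.sqrt = hB.sqrt := by subst h; rfl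

lemma SVT.nuclear_inv (U V A : Matrix (Fin n) (Fin n) ℝ) (hU : U * Uᵀ = 1) (hV : V * Vᵀ = 1) :
    nuclearNorm (U * A * Vᵀ) = nuclearNorm A := by
  have hU' : Uᵀ * U = 1 := mul_eq_one_comm.mp hU
  have h1 : (U * A * Vᵀ)ᵀ * (U * A * Vᵀ) = V * (Aᵀ * A) * Vᵀ := by
    simp only [Matrix.transpose_mul, Matrix.transpose_transpose]
    calc V * (Aᵀ * Uᵀ) * (U * A * Vᵀ) = V * (Aᵀ * (Uᵀ * U) * A) * Vᵀ := by
          simp only [Matrix.mul_assoc]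
      _ = V * (Aᵀ * A) * Vᵀ := by rw [hU', Matrix.mul_one]
  have h2 := SVT.sqrt_congr (transpose_mul_self_posSemidef (U * A * Vᵀ))
    (SVT.psd_conj (transpose_mul_self_posSemidef A) (W := V)) h1
  rw [nuclearNorm, h2, SVT.sqrt_conj _ hV, Matrix.trace_mul_cycle,
    mul_eq_one_comm.mp hV, Matrix.one_mul]
  rfl

lemma SVT.nuclear_diag (d : Fin n → ℝ) (hd : ∀ i, 0 ≤ d i) :
    nuclearNorm (Matrix.diagonal d) = ∑ i, d i := by
  have hpsd : (Matrix.diagonal d).PosSemidef := Matrix.posSemidef_diagonal_iff.mpr hd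
  have h1 : (Matrix.diagonal d)ᵀ * Matrix.diagonal d = Matrix.diagonal (fun i => d i * d i) := by
    rw [Matrix.diagonal_transpose, Matrix.diagonal_mul_diagonal]
  have h2 : (transpose_mul_self_posSemidef (Matrix.diagonal d)).sqrt = Matrix.diagonal d := by
    symm
    apply Matrix.PosSemidef.eq_sqrt_of_sq_eq hpsd
    rw [pow_two, h1, Matrix.diagonal_mul_diagonal]
  rw [nuclearNorm, h2, Matrix.trace_diagonal]

lemma SVT.frobSq_eq_trace (Q : Matrix (Fin n) (Fin n) ℝ) : frobSq Q = (Qᵀ * Q).trace := by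
  rw [frobSq, Matrix.trace]
  rw [Finset.sum_comm]
  apply Finset.sum_congr rfl
  intro j _
  simp [Matrix.diag, Matrix.mul_apply, pow_two]

lemma SVT.frob_inv (U V Q : Matrix (Fin n) (Fin n) ℝ) (hU : U * Uᵀ = 1) (hV : V * Vᵀ = 1) :
    frobSq (U * Q * Vᵀ) = frobSq Q := by
  have hU' : Uᵀ * U = 1 := mul_eq_one_comm.mp hU
  have hV' : Vᵀ * V = 1 := mul_eq_one_comm.mp hV
  rw [SVT.frobSq_eq_trace, SVT.frobSq_eq_trace]
  have h1 : (U * Q * Vᵀ)ᵀ * (U * Q * Vᵀ) = V * (Qᵀ * Q) * Vᵀ := by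
    simp only [Matrix.transpose_mul, Matrix.transpose_transpose]
    calc V * (Qᵀ * Uᵀ) * (U * Q * Vᵀ) = V * (Qᵀ * (Uᵀ * U) * Q) * Vᵀ := by
          simp only [Matrix.mul_assoc]
      _ = V * (Qᵀ * Q) * Vᵀ := by rw [hU', Matrix.mul_one]
  rw [h1, Matrix.trace_mul_cycle, ← Matrix.mul_assoc, hV', Matrix.one_mul]

lemma SVT.trace_le_sqrtsum (A : Matrix (Fin n) (Fin n) ℝ) (h : (Aᵀ * A).PosSemidef) :
    A.trace ≤ h.sqrt.trace := by
  have hH := h.1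
  set W : Matrix (Fin n) (Fin n) ℝ := (hH.eigenvectorUnitary : Matrix (Fin n) (Fin n) ℝ) with hWdef
  set μ : Fin n → ℝ := hH.eigenvalues with hμdef
  have hW1 : W * Wᵀ = 1 := by
    have := (Matrix.mem_unitaryGroup_iff).mp hH.eigenvectorUnitary.2
    rwa [Matrix.star_eq_conjTranspose, Matrix.conjTranspose_eq_transpose_of_trivial] at this
  have hWt : Wᵀ * W = 1 := mul_eq_one_comm.mp hW1
  have hspec : Aᵀ * A = W * Matrix.diagonal μ * Wᵀ := by
    have := hH.spectral_theorem
    rw [Unitary.conjStarAlgAut_apply, Matrix.star_eq_conjTranspose,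
      Matrix.conjTranspose_eq_transpose_of_trivial] at this
    exact this
  have hμ : ∀ i, 0 ≤ μ i := fun i => h.eigenvalues_nonneg i
  have hdpsd : (Matrix.diagonal (fun i => Real.sqrt (μ i))).PosSemidef :=
    Matrix.posSemidef_diagonal_iff.mpr (fun i => Real.sqrt_nonneg _)
  have hsq : h.sqrt = W * Matrix.diagonal (fun i => Real.sqrt (μ i)) * Wᵀ := by
    symm
    apply Matrix.PosSemidef.eq_sqrt_of_sq_eq (SVT.psd_conj hdpsd)
    rw [pow_two]
    calc W * Matrix.diagonal (fun i => Real.sqrt (μ i)) * Wᵀ *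
          (W * Matrix.diagonal (fun i => Real.sqrt (μ i)) * Wᵀ)
        = W * (Matrix.diagonal (fun i => Real.sqrt (μ i)) * (Wᵀ * W) *
            Matrix.diagonal (fun i => Real.sqrt (μ i))) * Wᵀ := by
          simp only [Matrix.mul_assoc]
      _ = W * Matrix.diagonal μ * Wᵀ := by
          rw [hWt, Matrix.mul_one, Matrix.diagonal_mul_diagonal]
          have heq : (fun i => Real.sqrt (μ i) * Real.sqrt (μ i)) = μ := by
            funext i; exact Real.mul_self_sqrt (hμ i)
          rw [heq]
      _ = Aᵀ * A := hspec.symm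
  have htr_sqrt : h.sqrt.trace = ∑ i, Real.sqrt (μ i) := by
    rw [hsq, Matrix.trace_mul_cycle, hWt, Matrix.one_mul, Matrix.trace_diagonal]
  have htrA : A.trace = (Wᵀ * A * W).trace := by
    rw [Matrix.trace_mul_cycle, hW1, Matrix.one_mul]
  have hAW : ∀ k, ((A * W)ᵀ * (A * W)) k k = μ k := by
    intro k
    have : (A * W)ᵀ * (A * W) = Matrix.diagonal μ := by
      rw [Matrix.transpose_mul]
      calc Wᵀ * Aᵀ * (A * W) = Wᵀ * (Aᵀ * A) * W := by simp only [Matrix.mul_assoc]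
        _ = (Wᵀ * W) * Matrix.diagonal μ * (Wᵀ * W) := by
            rw [hspec]; simp only [Matrix.mul_assoc]
        _ = Matrix.diagonal μ := by rw [hWt, Matrix.one_mul, Matrix.mul_one]
    rw [this, Matrix.diagonal_apply_eq]
  have hbound : ∀ k, (Wᵀ * A * W) k k ≤ Real.sqrt (μ k) := by
    intro k
    have ha : (Wᵀ * A * W) k k = ∑ i, W i k * (A * W) i k := by
      rw [Matrix.mul_assoc, Matrix.mul_apply]
      simp [Matrix.transpose_apply]
    have hcs := Finset.sum_mul_sq_le_sq_mul_sq Finset.univ (fun i => W i k)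
      (fun i => (A * W) i k)
    have hsum1 : ∑ i, (W i k) ^ 2 = 1 := by
      have : (Wᵀ * W) k k = 1 := by rw [hWt]; simp
      rw [← this, Matrix.mul_apply]
      simp [Matrix.transpose_apply, pow_two]
    have hsum2 : ∑ i, ((A * W) i k) ^ 2 = μ k := by
      have := hAW k
      rw [Matrix.mul_apply] at this
      rw [← this]
      simp [Matrix.transpose_apply, pow_two]
    rw [hsum1, hsum2, one_mul] at hcs
    calc (Wᵀ * A * W) k k ≤ |(Wᵀ * A * W) k k| := le_abs_self _
      _ = Real.sqrt (((Wᵀ * A * W) k k) ^ 2) := (Real.sqrt_sq_eq_abs _).symm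
      _ ≤ Real.sqrt (μ k) := Real.sqrt_le_sqrt (by rw [ha]; exact hcs)
  rw [htrA, htr_sqrt, Matrix.trace]
  exact Finset.sum_le_sum (fun k _ => hbound k)

lemma SVT.trace_le_nuclear (A : Matrix (Fin n) (Fin n) ℝ) : A.trace ≤ nuclearNorm A :=
  SVT.trace_le_sqrtsum A (transpose_mul_self_posSemidef A)

lemma SVT.absdiag_le_nuclear (M : Matrix (Fin n) (Fin n) ℝ) :
    ∑ i, |M i i| ≤ nuclearNorm M := by
  set ε : Fin n → ℝ := fun i => if M i i < 0 then -1 else 1 with hε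
  have hE : Matrix.diagonal ε * (Matrix.diagonal ε)ᵀ = 1 := by
    rw [Matrix.diagonal_transpose, Matrix.diagonal_mul_diagonal]
    have : (fun i => ε i * ε i) = fun _ => (1 : ℝ) := by
      funext i; by_cases h : M i i < 0 <;> simp [hε, h]
    rw [this, Matrix.diagonal_one]
  have hinv : nuclearNorm (1 * M * (Matrix.diagonal ε)ᵀ) = nuclearNorm M :=
    SVT.nuclear_inv 1 (Matrix.diagonal ε) M (by simp) hE
  have htr : (1 * M * (Matrix.diagonal ε)ᵀ).trace = ∑ i, |M i i| := by
    rw [Matrix.one_mul, Matrix.diagonal_transpose, Matrix.trace]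
    apply Finset.sum_congr rfl
    intro i _
    rw [Matrix.diag_apply, Matrix.mul_diagonal]
    by_cases h : M i i < 0
    · simp [hε, h, abs_of_neg h]
    · simp [hε, h, abs_of_nonneg (not_lt.mp h)]
  calc ∑ i, |M i i| = (1 * M * (Matrix.diagonal ε)ᵀ).trace := htr.symm
    _ ≤ nuclearNorm (1 * M * (Matrix.diagonal ε)ᵀ) := SVT.trace_le_nuclear _
    _ = nuclearNorm M := hinv

lemma SVT.scalar (η s x : ℝ) (hη : 0 < η) (hs : 0 ≤ s) :
    max (s - 1 / η) 0 + (η / 2) * (max (s - 1 / η) 0 - s) ^ 2 ≤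
      |x| + (η / 2) * (x - s) ^ 2 := by
  rcases le_or_gt s (1 / η) with hle | hgt
  · rw [max_eq_right (by linarith)]
    have h1 : η * s ≤ 1 := by
      have := (le_div_iff₀ hη).mp hle
      linarith
    have h2 : η * s * x ≤ |x| := by
      calc η * s * x ≤ |η * s * x| := le_abs_self _
        _ = η * s * |x| := by rw [abs_mul, abs_of_nonneg (mul_nonneg hη.le hs)]
        _ ≤ 1 * |x| := mul_le_mul_of_nonneg_right h1 (abs_nonneg _)
        _ = |x| := one_mul _
    nlinarith [sq_nonneg x, abs_nonneg x]
  · rw [max_eq_left (by linarith)]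
    have hexp : η / 2 * (x - s + 1 / η) ^ 2
        = η / 2 * (x - s) ^ 2 + (x - s) + η / 2 * (1 / η) ^ 2 := by
      field_simp
      ring
    have hc2 : η / 2 * (1 / η) ^ 2 = (1 / 2) * (1 / η) := by
      field_simp
    have hg : (s - 1 / η - s) ^ 2 = (1 / η) ^ 2 := by ring
    have h0 : 0 ≤ η / 2 * (x - s + 1 / η) ^ 2 := by positivity
    nlinarith [le_abs_self x]

end SVTAux

/-- Singular value thresholding: if `D = U·S·Vᵀ` with `U, V` orthogonal and `S`
diagonal with nonnegative entries, then `L* = U·S_η·Vᵀ`, where `S_η` has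
diagonal entries `max(S_ii − 1/η, 0)`, minimizes
`L ↦ ‖L‖_* + (η/2)·‖L − D‖_F²`. -/
theorem singular_value_thresholding (n : ℕ) (D U S V : Matrix (Fin n) (Fin n) ℝ)
    (η : ℝ) (hη : 0 < η)
    (hU : U * Uᵀ = 1) (hV : V * Vᵀ = 1)
    (hSdiag : ∀ i j, i ≠ j → S i j = 0) (hSnonneg : ∀ i, 0 ≤ S i i)
    (hSVD : D = U * S * Vᵀ) :
    let Sη : Matrix (Fin n) (Fin n) ℝ := Matrix.diagonal fun i => max (S i i - 1 / η) 0
    let Lstar : Matrix (Fin n) (Fin n) ℝ := U * Sη * Vᵀ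
    ∀ L : Matrix (Fin n) (Fin n) ℝ,
      nuclearNorm Lstar + (η / 2) * frobSq (Lstar - D) ≤
        nuclearNorm L + (η / 2) * frobSq (L - D) := by
  intro Sη Lstar L
  have hU' : Uᵀ * U = 1 := mul_eq_one_comm.mp hU
  have hV' : Vᵀ * V = 1 := mul_eq_one_comm.mp hV
  set t : Fin n → ℝ := fun i => max (S i i - 1 / η) 0 with ht
  have htnonneg : ∀ i, 0 ≤ t i := fun i => le_max_right _ _
  -- LHS computation
  have hnucLstar : nuclearNorm Lstar = ∑ i, t i := by
    rw [show Lstar = U * Sη * Vᵀ from rfl, SVT.nuclear_inv U V Sη hU hV,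
      show Sη = Matrix.diagonal t from rfl, SVT.nuclear_diag t htnonneg]
  have hLstarD : Lstar - D = U * (Sη - S) * Vᵀ := by
    rw [hSVD, show Lstar = U * Sη * Vᵀ from rfl, ← Matrix.sub_mul, ← Matrix.mul_sub]
  have hfrobLstar : frobSq (Lstar - D) = ∑ i, (t i - S i i) ^ 2 := by
    rw [hLstarD, SVT.frob_inv U V _ hU hV, frobSq]
    apply Finset.sum_congr rfl
    intro i _
    rw [Finset.sum_eq_single i]
    · simp [Matrix.sub_apply, Matrix.diagonal_apply_eq, Sη, t, one_div]
    · intro j _ hji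
      have h1 : Sη i j = 0 := Matrix.diagonal_apply_ne _ (fun h => hji h.symm)
      have h2 : S i j = 0 := hSdiag i j (fun h => hji h.symm)
      simp [Matrix.sub_apply, h1, h2]
    · intro h; exact absurd (Finset.mem_univ i) h
  -- RHS computation
  set M : Matrix (Fin n) (Fin n) ℝ := Uᵀ * L * V with hM
  have hLM : L = U * M * Vᵀ := by
    rw [hM]
    calc L = (U * Uᵀ) * L * (V * Vᵀ) := by rw [hU, hV, Matrix.one_mul, Matrix.mul_one]
      _ = U * (Uᵀ * L * V) * Vᵀ := by simp only [Matrix.mul_assoc]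
  have hnucL : nuclearNorm L = nuclearNorm M := by
    rw [hLM, SVT.nuclear_inv U V M hU hV]
  have hLD : L - D = U * (M - S) * Vᵀ := by
    rw [hSVD, hLM, ← Matrix.sub_mul, ← Matrix.mul_sub]
  have hfrobL : ∑ i, (M i i - S i i) ^ 2 ≤ frobSq (L - D) := by
    rw [hLD, SVT.frob_inv U V _ hU hV, frobSq]
    apply Finset.sum_le_sum
    intro i _
    have := Finset.single_le_sum (f := fun j => ((M - S) i j) ^ 2)
      (fun j _ => sq_nonneg _) (Finset.mem_univ i)
    simpa [Matrix.sub_apply] using this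
  have habs : ∑ i, |M i i| ≤ nuclearNorm M := SVT.absdiag_le_nuclear M
  -- put together
  have key : ∑ i, (t i + (η / 2) * (t i - S i i) ^ 2) ≤
      ∑ i, (|M i i| + (η / 2) * (M i i - S i i) ^ 2) := by
    apply Finset.sum_le_sum
    intro i _
    exact SVT.scalar η (S i i) (M i i) hη (hSnonneg i)
  have hηpos : 0 ≤ η / 2 := by linarith
  calc nuclearNorm Lstar + (η / 2) * frobSq (Lstar - D)
      = ∑ i, (t i + (η / 2) * (t i - S i i) ^ 2) := by
        rw [hnucLstar, hfrobLstar, Finset.sum_add_distrib, Finset.mul_sum]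
    _ ≤ ∑ i, (|M i i| + (η / 2) * (M i i - S i i) ^ 2) := key
    _ = ∑ i, |M i i| + (η / 2) * ∑ i, (M i i - S i i) ^ 2 := by
        rw [Finset.sum_add_distrib, Finset.mul_sum]
    _ ≤ nuclearNorm M + (η / 2) * frobSq (L - D) := by
        have := mul_le_mul_of_nonneg_left hfrobL hηpos
        linarith [habs]
    _ = nuclearNorm L + (η / 2) * frobSq (L - D) := by rw [hnucL]
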